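/- Under multivariate regular variation with limit measure ν homogeneous of degree -α and P(‖X₁‖ > t)/t^{-α} → c ∈ (0,∞), for every fixed r > 0 the convergence P(X₁ ∈ tH_{r,u})/t^{-α} → c·ν(H_{r,u}) holds uniformly over unit vectors u (Lemma 1). -/

import Mathlib

open MeasureTheory Filter
open scoped RealInnerProductSpace Pointwise

section Aux

variable {d : ℕ}

private lemma rv_meas (u : EuclideanSpace ℝ (Fin d)) (s : ℝ) :
    MeasurableSet {x : EuclideanSpace ℝ (Fin d) | s ≤ ⟪u, x⟫} :=
  (isClosed_le continuous_const (continuous_const.inner continuous_id)).measurableSet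

private lemma rv_net (δ : ℝ) (hδ : 0 < δ) :
    ∃ T : Finset (EuclideanSpace ℝ (Fin d)), (∀ w ∈ T, ‖w‖ = 1) ∧
      ∀ u : EuclideanSpace ℝ (Fin d), ‖u‖ = 1 → ∃ w ∈ T, ‖u - w‖ < δ := by
  classical
  set S := Metric.sphere (0 : EuclideanSpace ℝ (Fin d)) 1
  have hS : IsCompact S := isCompact_sphere 0 1
  have hcov : S ⊆ ⋃ w : S, Metric.ball (w : EuclideanSpace ℝ (Fin d)) δ := by
    intro x hx
    exact Set.mem_iUnion.2 ⟨⟨x, hx⟩, Metric.mem_ball_self hδ⟩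
  obtain ⟨t, ht⟩ := hS.elim_finite_subcover _ (fun w : S => Metric.isOpen_ball) hcov
  refine ⟨t.image (fun w : S => (w : EuclideanSpace ℝ (Fin d))), ?_, ?_⟩
  · intro w hw
    simp only [Finset.mem_image] at hw
    obtain ⟨v, _, rfl⟩ := hw
    simpa [S] using v.2
  · intro u hu
    have hus : u ∈ S := by simp [S, hu]
    obtain ⟨w, hw, hmem⟩ := Set.mem_iUnion₂.1 (ht hus)
    refine ⟨w, Finset.mem_image_of_mem _ hw, ?_⟩
    simpa [dist_eq_norm] using hmem

private lemma rv_scale (ν : Measure (EuclideanSpace ℝ (Fin d))) (α : ℝ)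
    (hom : ∀ a : ℝ, 0 < a → ∀ B : Set (EuclideanSpace ℝ (Fin d)), MeasurableSet B →
      (∃ ε > 0, ∀ x ∈ B, ε ≤ ‖x‖) → ν (a • B) = ENNReal.ofReal (a ^ (-α)) * ν B)
    (u : EuclideanSpace ℝ (Fin d)) (hu : ‖u‖ = 1) (a s : ℝ) (ha : 0 < a) (hs : 0 < s) :
    ν {x | a * s ≤ ⟪u, x⟫} = ENNReal.ofReal (a ^ (-α)) * ν {x | s ≤ ⟪u, x⟫} := by
  have hsmul : a • {x : EuclideanSpace ℝ (Fin d) | s ≤ ⟪u, x⟫} = {x | a * s ≤ ⟪u, x⟫} := by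
    ext x
    rw [Set.mem_smul_set_iff_inv_smul_mem₀ (ne_of_gt ha)]
    simp only [Set.mem_setOf_eq, real_inner_smul_right]
    rw [le_inv_mul_iff₀ ha]
  rw [← hsmul]
  refine hom a ha _ (rv_meas u s) ⟨s, hs, fun x hx => ?_⟩
  calc s ≤ ⟪u, x⟫ := hx
    _ ≤ ‖u‖ * ‖x‖ := real_inner_le_norm u x
    _ = ‖x‖ := by rw [hu, one_mul]

private lemma rv_fin (ν : Measure (EuclideanSpace ℝ (Fin d))) (α : ℝ)
    (hom : ∀ a : ℝ, 0 < a → ∀ B : Set (EuclideanSpace ℝ (Fin d)), MeasurableSet B →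
      (∃ ε > 0, ∀ x ∈ B, ε ≤ ‖x‖) → ν (a • B) = ENNReal.ofReal (a ^ (-α)) * ν B)
    (u : EuclideanSpace ℝ (Fin d)) (hu : ‖u‖ = 1)
    (hfin : ν {x | 1 ≤ ⟪u, x⟫} ≠ ⊤) (s : ℝ) (hs : 0 < s) :
    ν {x | s ≤ ⟪u, x⟫} ≠ ⊤ := by
  have := rv_scale ν α hom u hu s 1 hs one_pos
  rw [mul_one] at this
  rw [this]
  exact ENNReal.mul_ne_top ENNReal.ofReal_ne_top hfin

private lemma rv_frontier (ν : Measure (EuclideanSpace ℝ (Fin d))) (α : ℝ)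
    (hom : ∀ a : ℝ, 0 < a → ∀ B : Set (EuclideanSpace ℝ (Fin d)), MeasurableSet B →
      (∃ ε > 0, ∀ x ∈ B, ε ≤ ‖x‖) → ν (a • B) = ENNReal.ofReal (a ^ (-α)) * ν B)
    (u : EuclideanSpace ℝ (Fin d)) (hu : ‖u‖ = 1)
    (hfin : ν {x | 1 ≤ ⟪u, x⟫} ≠ ⊤) (s : ℝ) (hs : 0 < s) :
    ν {x | ⟪u, x⟫ = s} = 0 := by
  have hfin' : ν {x | s ≤ ⟪u, x⟫} ≠ ⊤ := rv_fin ν α hom u hu hfin s hs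
  have key : ν {x | s ≤ ⟪u, x⟫} ≤ ν {x | s < ⟪u, x⟫} := by
    have hseq : Tendsto (fun n : ℕ => ENNReal.ofReal ((1 + 1/(n+1) : ℝ) ^ (-α)) * ν {x | s ≤ ⟪u, x⟫})
        atTop (nhds (ν {x | s ≤ ⟪u, x⟫})) := by
      have h1 : Tendsto (fun n : ℕ => (1 + 1/(n+1) : ℝ)) atTop (nhds 1) := by
        have h2 := tendsto_one_div_add_atTop_nhds_zero_nat.const_add (1:ℝ)
        simpa using h2
      have h2 : Tendsto (fun n : ℕ => ((1 + 1/(n+1) : ℝ)) ^ (-α)) atTop (nhds 1) := by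
        have := h1.rpow_const (p := -α) (Or.inl one_ne_zero)
        simpa using this
      have h3 := ENNReal.Tendsto.mul_const (b := ν {x | s ≤ ⟪u, x⟫}) (ENNReal.tendsto_ofReal h2)
        (Or.inl (by simp))
      simpa using h3
    refine le_of_tendsto hseq (Filter.Eventually.of_forall fun n => ?_)
    have hgt : (1:ℝ) < 1 + 1/(n+1) := by
      have : (0:ℝ) < 1/(n+1) := by positivity
      linarith
    calc ENNReal.ofReal ((1 + 1/(n+1) : ℝ) ^ (-α)) * ν {x | s ≤ ⟪u, x⟫}
        = ν {x | (1 + 1/(n+1)) * s ≤ ⟪u, x⟫} :=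
          (rv_scale ν α hom u hu _ s (by linarith) hs).symm
      _ ≤ ν {x | s < ⟪u, x⟫} := by
          refine measure_mono fun x hx => ?_
          simp only [Set.mem_setOf_eq] at hx ⊢
          nlinarith
  have hsub : {x : EuclideanSpace ℝ (Fin d) | ⟪u, x⟫ = s} ⊆
      {x | s ≤ ⟪u, x⟫} \ {x | s < ⟪u, x⟫} := by
    intro x hx
    simp only [Set.mem_setOf_eq] at hx
    exact ⟨le_of_eq hx.symm, fun (h : s < ⟪u, x⟫) => lt_irrefl s (by rwa [hx] at h)⟩
  have hopen : MeasurableSet {x : EuclideanSpace ℝ (Fin d) | s < ⟪u, x⟫} :=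
    (isOpen_lt continuous_const (continuous_const.inner continuous_id)).measurableSet
  have hlt : ν {x | s < ⟪u, x⟫} ≠ ⊤ :=
    fun h => hfin' (top_le_iff.1 (h ▸ measure_mono (Set.setOf_subset_setOf.2 fun x => le_of_lt)))
  have hdiff := measure_diff (Set.setOf_subset_setOf.2 fun x => le_of_lt)
    hopen.nullMeasurableSet hlt
  refine le_antisymm ?_ zero_le
  calc ν {x | ⟪u, x⟫ = s} ≤ ν ({x | s ≤ ⟪u, x⟫} \ {x | s < ⟪u, x⟫}) := measure_mono hsub
    _ = ν {x | s ≤ ⟪u, x⟫} - ν {x | s < ⟪u, x⟫} := hdiff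
    _ = 0 := tsub_eq_zero_of_le key

private lemma rv_cover (T : Finset (EuclideanSpace ℝ (Fin d)))
    (hnet : ∀ u : EuclideanSpace ℝ (Fin d), ‖u‖ = 1 → ∃ w ∈ T, ‖u - w‖ < 1/2)
    (b : ℝ) (hb : 0 < b) :
    {x : EuclideanSpace ℝ (Fin d) | b ≤ ‖x‖} ⊆ ⋃ w ∈ T, {x | b/2 ≤ ⟪w, x⟫} := by
  intro x hx
  simp only [Set.mem_setOf_eq] at hx
  have hxpos : 0 < ‖x‖ := lt_of_lt_of_le hb hx
  set v := ‖x‖⁻¹ • x with hv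
  have hvnorm : ‖v‖ = 1 := by
    rw [hv, norm_smul, norm_inv, norm_norm, inv_mul_cancel₀ (ne_of_gt hxpos)]
  obtain ⟨w, hwT, hww⟩ := hnet v hvnorm
  refine Set.mem_biUnion hwT ?_
  have hvx : ⟪v, x⟫ = ‖x‖ := by
    rw [hv, real_inner_smul_left, real_inner_self_eq_norm_sq]
    field_simp
  have h2 : |⟪v - w, x⟫| ≤ ‖v - w‖ * ‖x‖ := abs_real_inner_le_norm _ _
  have h3 : ⟪w, x⟫ = ⟪v, x⟫ - ⟪v - w, x⟫ := by rw [inner_sub_left]; ring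
  have h4 : ‖v - w‖ * ‖x‖ ≤ (1/2) * ‖x‖ :=
    mul_le_mul_of_nonneg_right hww.le (norm_nonneg x)
  show b/2 ≤ ⟪w, x⟫
  have := abs_le.1 h2
  rw [h3, hvx]
  linarith

private lemma rv_hA {Ω : Type*} [MeasurableSpace Ω] (μ : Measure Ω) [IsProbabilityMeasure μ]
    (X : Ω → EuclideanSpace ℝ (Fin d)) (α c : ℝ) (hα : 0 < α) (hc : 0 < c)
    (hnorm : Tendsto (fun t : ℝ => (μ {ω | t < ‖X ω‖}).toReal / t ^ (-α)) atTop (nhds c)) :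
    Tendsto (fun t : ℝ => (μ {ω | t ≤ ‖X ω‖}).toReal / t ^ (-α)) atTop (nhds c) := by
  rw [Metric.tendsto_nhds]
  intro ε hε
  set e := ε / (2 * c) with he
  have hepos : 0 < e := by positivity
  set b := (1 + e) ^ (-α⁻¹) with hbdef
  have h1e : (1:ℝ) < 1 + e := by linarith
  have hb0 : 0 < b := Real.rpow_pos_of_pos (by linarith) _
  have hb1 : b < 1 := Real.rpow_lt_one_of_one_lt_of_neg h1e (by simp [hα.ne'];  positivity)
  have hbpow : b ^ (-α) = 1 + e := by
    rw [hbdef, ← Real.rpow_mul (by linarith : (0:ℝ) ≤ 1 + e),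
      show (-α⁻¹) * (-α) = 1 by field_simp, Real.rpow_one]
  have hcb : c * b ^ (-α) = c + ε/2 := by
    rw [hbpow, he]; field_simp <;> ring
  have hmono : ∀ {A B : Set Ω}, A ⊆ B → (μ A).toReal ≤ (μ B).toReal :=
    fun h => ENNReal.toReal_mono (measure_ne_top μ _) (measure_mono h)
  have hcompt : Tendsto (fun t : ℝ => b * t) atTop atTop :=
    Tendsto.const_mul_atTop hb0 tendsto_id
  have hcomp : Tendsto (fun t : ℝ => (μ {ω | b * t < ‖X ω‖}).toReal / (b*t) ^ (-α) * b ^ (-α))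
      atTop (nhds (c * b ^ (-α))) := (hnorm.comp hcompt).mul_const _
  have E2 : ∀ᶠ t : ℝ in atTop,
      (μ {ω | b * t < ‖X ω‖}).toReal / (b*t) ^ (-α) * b ^ (-α) < c + ε :=
    hcomp.eventually_lt_const (by rw [hcb]; linarith)
  have E1 : ∀ᶠ t : ℝ in atTop, c - ε < (μ {ω | t < ‖X ω‖}).toReal / t ^ (-α) :=
    hnorm.eventually_const_lt (by linarith)
  filter_upwards [E1, E2, eventually_gt_atTop 0] with t h1 h2 h3
  have htα : (0:ℝ) < t ^ (-α) := Real.rpow_pos_of_pos h3 _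
  rw [Real.dist_eq, abs_sub_lt_iff]
  constructor
  · have hsub : {ω | t ≤ ‖X ω‖} ⊆ {ω | b * t < ‖X ω‖} := by
      intro ω hω
      have : b * t < t := by nlinarith
      exact lt_of_lt_of_le this hω
    have heq : (μ {ω | b * t < ‖X ω‖}).toReal / (b*t) ^ (-α) * b ^ (-α)
        = (μ {ω | b * t < ‖X ω‖}).toReal / t ^ (-α) := by
      rw [Real.mul_rpow hb0.le h3.le, div_mul_eq_div_div, div_right_comm,
        div_mul_cancel₀ _ (Real.rpow_pos_of_pos hb0 (-α)).ne']
    have hle : (μ {ω | t ≤ ‖X ω‖}).toReal / t ^ (-α)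
        ≤ (μ {ω | b * t < ‖X ω‖}).toReal / t ^ (-α) :=
      (div_le_div_iff_of_pos_right htα).2 (hmono hsub)
    rw [heq] at h2
    linarith
  · have hsub : {ω | t < ‖X ω‖} ⊆ {ω | t ≤ ‖X ω‖} :=
      Set.setOf_subset_setOf.2 fun ω => le_of_lt
    have hle : (μ {ω | t < ‖X ω‖}).toReal / t ^ (-α)
        ≤ (μ {ω | t ≤ ‖X ω‖}).toReal / t ^ (-α) :=
      (div_le_div_iff_of_pos_right htα).2 (hmono hsub)
    linarith

private lemma rv_pointwise {Ω : Type*} [MeasurableSpace Ω] (μ : Measure Ω)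
    [IsProbabilityMeasure μ]
    (X : Ω → EuclideanSpace ℝ (Fin d)) (α c : ℝ) (hc : 0 < c)
    (ν : Measure (EuclideanSpace ℝ (Fin d)))
    (hconv : ∀ B : Set (EuclideanSpace ℝ (Fin d)), MeasurableSet B →
      (∃ ε > 0, ∀ x ∈ B, ε ≤ ‖x‖) → ν (frontier B) = 0 → ν B ≠ ⊤ →
      Tendsto (fun t : ℝ =>
          (μ {ω | X ω ∈ t • B}).toReal / (μ {ω | t ≤ ‖X ω‖}).toReal)
        atTop (nhds (ν B).toReal))
    (hnorm : Tendsto (fun t : ℝ => (μ {ω | t < ‖X ω‖}).toReal / t ^ (-α)) atTop (nhds c))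
    (hA : Tendsto (fun t : ℝ => (μ {ω | t ≤ ‖X ω‖}).toReal / t ^ (-α)) atTop (nhds c))
    (hfrontier : ∀ s : ℝ, 0 < s → ∀ u : EuclideanSpace ℝ (Fin d), ‖u‖ = 1 →
        ν {x | ⟪u, x⟫ = s} = 0)
    (hfin' : ∀ s : ℝ, 0 < s → ∀ u : EuclideanSpace ℝ (Fin d), ‖u‖ = 1 →
        ν {x | s ≤ ⟪u, x⟫} ≠ ⊤)
    (u : EuclideanSpace ℝ (Fin d)) (hu : ‖u‖ = 1) (r : ℝ) (hr : 0 < r) :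
    Tendsto (fun t : ℝ => (μ {ω | t * r ≤ ⟪u, X ω⟫}).toReal / t ^ (-α))
      atTop (nhds (c * (ν {x | r ≤ ⟪u, x⟫}).toReal)) := by
  set B : Set (EuclideanSpace ℝ (Fin d)) := {x | r ≤ ⟪u, x⟫} with hB
  have hBmeas : MeasurableSet B := rv_meas u r
  have hBaway : ∃ ε > 0, ∀ x ∈ B, ε ≤ ‖x‖ := by
    refine ⟨r, hr, fun x hx => ?_⟩
    calc r ≤ ⟪u, x⟫ := hx
      _ ≤ ‖u‖ * ‖x‖ := real_inner_le_norm u x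
      _ = ‖x‖ := by rw [hu, one_mul]
  have hBfr : ν (frontier B) = 0 := by
    refine measure_mono_null ?_ (hfrontier r hr u hu)
    have h : Continuous fun x : EuclideanSpace ℝ (Fin d) => ⟪u, x⟫ :=
      continuous_const.inner continuous_id
    have := frontier_le_subset_eq (continuous_const (y := r)) h
    exact this.trans (fun x hx => hx.symm)
  have hBfin : ν B ≠ ⊤ := hfin' r hr u hu
  have hratio := hconv B hBmeas hBaway hBfr hBfin
  have hmul := hratio.mul hA
  rw [mul_comm ((ν B).toReal) c] at hmul
  refine hmul.congr' ?_
  have Epos : ∀ᶠ t : ℝ in atTop, 0 < (μ {ω | t < ‖X ω‖}).toReal / t ^ (-α) :=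
    hnorm.eventually_const_lt (by positivity : (0:ℝ) < c) |>.mono fun t h => h
  filter_upwards [Epos, eventually_gt_atTop 0] with t hpos ht
  have htα : (0:ℝ) < t ^ (-α) := Real.rpow_pos_of_pos ht _
  have hnum : 0 < (μ {ω | t < ‖X ω‖}).toReal := by
    by_contra h
    push_neg at h
    have : (μ {ω | t < ‖X ω‖}).toReal = 0 := le_antisymm h ENNReal.toReal_nonneg
    rw [this, zero_div] at hpos
    exact lt_irrefl 0 hpos
  have hden : (0:ℝ) < (μ {ω | t ≤ ‖X ω‖}).toReal := by
    refine lt_of_lt_of_le hnum (ENNReal.toReal_mono (measure_ne_top μ _) (measure_mono ?_))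
    exact Set.setOf_subset_setOf.2 fun ω => le_of_lt
  have hset : {ω | X ω ∈ t • B} = {ω | t * r ≤ ⟪u, X ω⟫} := by
    have hsmul : t • B = {x | t * r ≤ ⟪u, x⟫} := by
      ext x
      rw [Set.mem_smul_set_iff_inv_smul_mem₀ (ne_of_gt ht)]
      simp only [hB, Set.mem_setOf_eq, real_inner_smul_right]
      rw [le_inv_mul_iff₀ ht]
    rw [hsmul]
    rfl
  show _ = _
  rw [hset]
  field_simp

private lemma rv_div_rpow (t a N α : ℝ) (ht : 0 < t) (ha : 0 < a) :
    N / (t*a) ^ (-α) * a ^ (-α) = N / t ^ (-α) := by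
  rw [Real.mul_rpow ht.le ha.le, div_mul_eq_div_div,
    div_mul_cancel₀ _ (Real.rpow_pos_of_pos ha (-α)).ne']

end Aux

set_option maxHeartbeats 1600000 in
/-- Lemma 1: under multivariate regular variation with limit measure `ν`
homogeneous of degree `-α` and `P(‖X₁‖ > t)/t^{-α} → c ∈ (0,∞)`, for every fixed
`r > 0` the convergence `P(X₁ ∈ tH_{r,u})/t^{-α} → c ν(H_{r,u})` holds uniformly
over unit vectors `u`. -/
theorem lemma1_uniform_convergence {d : ℕ} (hd : 0 < d) {Ω : Type*} [MeasurableSpace Ω]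
    (μ : Measure Ω) [IsProbabilityMeasure μ]
    (X : Ω → EuclideanSpace ℝ (Fin d)) (hX : Measurable X)
    (α c : ℝ) (hα : 0 < α) (hc : 0 < c) (ν : Measure (EuclideanSpace ℝ (Fin d)))
    (hom : ∀ a : ℝ, 0 < a → ∀ B : Set (EuclideanSpace ℝ (Fin d)), MeasurableSet B →
      (∃ ε > 0, ∀ x ∈ B, ε ≤ ‖x‖) → ν (a • B) = ENNReal.ofReal (a ^ (-α)) * ν B)
    (hconv : ∀ B : Set (EuclideanSpace ℝ (Fin d)), MeasurableSet B →
      (∃ ε > 0, ∀ x ∈ B, ε ≤ ‖x‖) → ν (frontier B) = 0 → ν B ≠ ⊤ →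
      Tendsto (fun t : ℝ =>
          (μ {ω | X ω ∈ t • B}).toReal / (μ {ω | t ≤ ‖X ω‖}).toReal)
        atTop (nhds (ν B).toReal))
    (hnorm : Tendsto (fun t : ℝ => (μ {ω | t < ‖X ω‖}).toReal / t ^ (-α))
      atTop (nhds c))
    (hcont : ∀ u : EuclideanSpace ℝ (Fin d), ‖u‖ = 1 →
      Continuous (fun w : ℝ => (μ {ω | ⟪u, X ω⟫ ≤ w}).toReal))
    (hfin : ∀ u : EuclideanSpace ℝ (Fin d), ‖u‖ = 1 → ν {x | 1 ≤ ⟪u, x⟫} ≠ ⊤)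
    (hpos : ∃ m > 0, ∀ u : EuclideanSpace ℝ (Fin d), ‖u‖ = 1 →
      ENNReal.ofReal m ≤ ν {x | 1 ≤ ⟪u, x⟫})
    (r : ℝ) (hr : 0 < r) :
    Tendsto (fun t : ℝ => ⨆ u : {u : EuclideanSpace ℝ (Fin d) // ‖u‖ = 1},
        |(μ {ω | t * r ≤ ⟪u.1, X ω⟫}).toReal / t ^ (-α)
          - c * (ν {x | r ≤ ⟪u.1, x⟫}).toReal|)
      atTop (nhds 0) := by
  classical
  have hA := rv_hA μ X α c hα hc hnorm
  have hfrontier : ∀ s : ℝ, 0 < s → ∀ u : EuclideanSpace ℝ (Fin d), ‖u‖ = 1 →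
      ν {x | ⟪u, x⟫ = s} = 0 := fun s hs u hu => rv_frontier ν α hom u hu (hfin u hu) s hs
  have hfinS : ∀ s : ℝ, 0 < s → ∀ u : EuclideanSpace ℝ (Fin d), ‖u‖ = 1 →
      ν {x | s ≤ ⟪u, x⟫} ≠ ⊤ := fun s hs u hu => rv_fin ν α hom u hu (hfin u hu) s hs
  have hptw : ∀ v : EuclideanSpace ℝ (Fin d), ‖v‖ = 1 →
      Tendsto (fun t : ℝ => (μ {ω | t * r ≤ ⟪v, X ω⟫}).toReal / t ^ (-α))
        atTop (nhds (c * (ν {x | r ≤ ⟪v, x⟫}).toReal)) :=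
    fun v hv => rv_pointwise μ X α c hc ν hconv hnorm hA hfrontier hfinS v hv r hr
  -- fixed half-net and the tail bound for ν
  obtain ⟨T₀, hT₀unit, hT₀net⟩ := rv_net (d := d) (1/2) one_half_pos
  set CR : ℝ := (∑ w ∈ T₀, ν {x | 1 ≤ ⟪w, x⟫}).toReal with hCR
  have hCνfin : (∑ w ∈ T₀, ν {x | 1 ≤ ⟪w, x⟫}) ≠ ⊤ :=
    ENNReal.sum_ne_top.2 fun w hw => hfin w (hT₀unit w hw)
  have hCR0 : 0 ≤ CR := ENNReal.toReal_nonneg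
  have hνtail : ∀ b : ℝ, 0 < b → ν {x | b ≤ ‖x‖} ≠ ⊤ ∧
      (ν {x | b ≤ ‖x‖}).toReal ≤ (b/2) ^ (-α) * CR := by
    intro b hb
    have hsub := rv_cover T₀ hT₀net b hb
    have hbd : ν {x | b ≤ ‖x‖} ≤ ENNReal.ofReal ((b/2) ^ (-α)) * ∑ w ∈ T₀, ν {x | 1 ≤ ⟪w, x⟫} := by
      calc ν {x | b ≤ ‖x‖} ≤ ν (⋃ w ∈ T₀, {x | b/2 ≤ ⟪w, x⟫}) := measure_mono hsub
        _ ≤ ∑ w ∈ T₀, ν {x | b/2 ≤ ⟪w, x⟫} := measure_biUnion_finset_le _ _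
        _ = ∑ w ∈ T₀, ENNReal.ofReal ((b/2) ^ (-α)) * ν {x | 1 ≤ ⟪w, x⟫} := by
            refine Finset.sum_congr rfl fun w hw => ?_
            have := rv_scale ν α hom w (hT₀unit w hw) (b/2) 1 (by linarith) one_pos
            rw [mul_one] at this
            exact this
        _ = ENNReal.ofReal ((b/2) ^ (-α)) * ∑ w ∈ T₀, ν {x | 1 ≤ ⟪w, x⟫} := by
            rw [Finset.mul_sum]
    have hRfin : ENNReal.ofReal ((b/2) ^ (-α)) * ∑ w ∈ T₀, ν {x | 1 ≤ ⟪w, x⟫} ≠ ⊤ :=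
      ENNReal.mul_ne_top ENNReal.ofReal_ne_top hCνfin
    refine ⟨fun h => hRfin (top_le_iff.1 (h ▸ hbd)), ?_⟩
    calc (ν {x | b ≤ ‖x‖}).toReal
        ≤ (ENNReal.ofReal ((b/2) ^ (-α)) * ∑ w ∈ T₀, ν {x | 1 ≤ ⟪w, x⟫}).toReal :=
          ENNReal.toReal_mono hRfin hbd
      _ = (b/2) ^ (-α) * CR := by
          rw [ENNReal.toReal_mul, ENNReal.toReal_ofReal (Real.rpow_nonneg (by linarith) _), hCR]
  -- scaling for toReal
  have hGscale : ∀ v : EuclideanSpace ℝ (Fin d), ‖v‖ = 1 → ∀ a : ℝ, 0 < a →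
      (ν {x | a * r ≤ ⟪v, x⟫}).toReal = a ^ (-α) * (ν {x | r ≤ ⟪v, x⟫}).toReal := by
    intro v hv a ha
    rw [rv_scale ν α hom v hv a r ha hr, ENNReal.toReal_mul,
      ENNReal.toReal_ofReal (Real.rpow_nonneg ha.le _)]
  -- uniform bound M on ν(H_{r,v})
  set M : ℝ := (r/2) ^ (-α) * CR with hM
  have hM0 : 0 ≤ M := mul_nonneg (Real.rpow_nonneg (by linarith) _) hCR0
  have hGM : ∀ v : EuclideanSpace ℝ (Fin d), ‖v‖ = 1 →
      (ν {x | r ≤ ⟪v, x⟫}).toReal ≤ M := by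
    intro v hv
    have hsub : {x : EuclideanSpace ℝ (Fin d) | r ≤ ⟪v, x⟫} ⊆ {x | r ≤ ‖x‖} := by
      intro x hx
      calc r ≤ ⟪v, x⟫ := hx
        _ ≤ ‖v‖ * ‖x‖ := real_inner_le_norm v x
        _ = ‖x‖ := by rw [hv, one_mul]
    calc (ν {x | r ≤ ⟪v, x⟫}).toReal ≤ (ν {x | r ≤ ‖x‖}).toReal :=
          ENNReal.toReal_mono (hνtail r hr).1 (measure_mono hsub)
      _ ≤ M := (hνtail r hr).2
  clear_value CR M
  -- measure toReal subadditivity helpers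
  have hμ3 : ∀ {A B C' : Set Ω}, A ⊆ B ∪ C' →
      (μ A).toReal ≤ (μ B).toReal + (μ C').toReal := by
    intro A B C' h
    calc (μ A).toReal ≤ (μ (B ∪ C')).toReal :=
          ENNReal.toReal_mono (measure_ne_top μ _) (measure_mono h)
      _ ≤ ((μ B) + (μ C')).toReal :=
          ENNReal.toReal_mono (ENNReal.add_ne_top.2 ⟨measure_ne_top μ _, measure_ne_top μ _⟩)
            (measure_union_le _ _)
      _ = (μ B).toReal + (μ C').toReal :=
          ENNReal.toReal_add (measure_ne_top μ _) (measure_ne_top μ _)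
  have hν3 : ∀ {A B C' : Set (EuclideanSpace ℝ (Fin d))}, A ⊆ B ∪ C' →
      ν B ≠ ⊤ → ν C' ≠ ⊤ → (ν A).toReal ≤ (ν B).toReal + (ν C').toReal := by
    intro A B C' h hB hC
    calc (ν A).toReal ≤ ((ν B) + (ν C')).toReal :=
          ENNReal.toReal_mono (ENNReal.add_ne_top.2 ⟨hB, hC⟩)
            ((measure_mono h).trans (measure_union_le _ _))
      _ = (ν B).toReal + (ν C').toReal := ENNReal.toReal_add hB hC
  -- start of the ε–argument
  rw [Metric.tendsto_nhds]
  intro ε hε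
  set ε' : ℝ := ε / 2 with hε'def
  have hε'pos : 0 < ε' := by rw [hε'def]; exact div_pos hε two_pos
  clear_value ε'
  have h2α1 : (1:ℝ) ≤ 2 ^ α := Real.one_le_rpow one_le_two hα.le
  have h2α0 : (0:ℝ) < 2 ^ α := lt_of_lt_of_le one_pos h2α1
  set ρ : ℝ := min 1 (ε' / (4 * 2 ^ α)) with hρdef
  have hρ0 : 0 < ρ := lt_min one_pos (div_pos hε'pos (by positivity))
  have hρ1 : ρ ≤ 1 := min_le_left _ _
  have hρb : ρ * 2 ^ α ≤ ε' / 4 := by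
    have h1 : ρ * 2 ^ α ≤ (ε' / (4 * 2 ^ α)) * 2 ^ α :=
      mul_le_mul_of_nonneg_right (min_le_right _ _) h2α0.le
    have h2 : (ε' / (4 * 2 ^ α)) * 2 ^ α = ε' / 4 := by field_simp
    linarith
  clear_value ρ
  -- choice of K
  have hk1 : Tendsto (fun K : ℝ => (c+1) * K ^ (-α)) atTop (nhds 0) := by
    have := (tendsto_rpow_neg_atTop hα).const_mul (c+1)
    simpa using this
  have hk2 : Tendsto (fun K : ℝ => c * ((K/2) ^ (-α) * CR)) atTop (nhds 0) := by
    have h0 : Tendsto (fun K : ℝ => (K/2 : ℝ)) atTop atTop :=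
      Tendsto.atTop_div_const two_pos tendsto_id
    have h1 : Tendsto (fun K : ℝ => ((K/2) ^ (-α) : ℝ)) atTop (nhds 0) :=
      (tendsto_rpow_neg_atTop hα).comp h0
    have := (h1.mul_const CR).const_mul c
    simpa using this
  obtain ⟨K, hK⟩ := ((hk1.eventually_lt_const (show (0:ℝ) < ε'/4 by linarith)).and
    ((hk2.eventually_lt_const (show (0:ℝ) < ε'/4 by linarith)).and
      (eventually_ge_atTop 1))).exists
  obtain ⟨hKa, hKb, hK1⟩ := hK
  have hK0 : (0:ℝ) < K := lt_of_lt_of_le one_pos hK1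
  have hKα0 : (0:ℝ) ≤ K ^ (-α) := (Real.rpow_pos_of_pos hK0 _).le
  set τ : ℝ := (K/2) ^ (-α) * CR with hτ
  have hτ0 : 0 ≤ τ := by
    rw [hτ]
    exact mul_nonneg (Real.rpow_nonneg (by linarith) _) hCR0
  clear_value τ
  -- choice of η
  have hφcont : Tendsto (fun η : ℝ => c * M * ((1-η) ^ (-α) - (1+η) ^ (-α)))
      (nhds 0) (nhds 0) := by
    have h1 : ContinuousAt (fun η : ℝ => ((1-η) ^ (-α) : ℝ)) 0 :=
      (continuousAt_const.sub continuousAt_id).rpow_const (Or.inl (by norm_num))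
    have h2 : ContinuousAt (fun η : ℝ => ((1+η) ^ (-α) : ℝ)) 0 :=
      (continuousAt_const.add continuousAt_id).rpow_const (Or.inl (by norm_num))
    have h3 : ContinuousAt (fun η : ℝ => c * M * ((1-η) ^ (-α) - (1+η) ^ (-α))) 0 :=
      continuousAt_const.mul (h1.sub h2)
    simpa [Real.one_rpow] using h3.tendsto
  have hφev := hφcont.eventually_lt_const (show (0:ℝ) < ε'/4 by linarith)
  rw [Metric.eventually_nhds_iff] at hφev
  obtain ⟨δ₀, hδ₀, hball⟩ := hφev
  set η : ℝ := min (δ₀/2) (1/2) with hηdef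
  have hη0 : 0 < η := lt_min (by positivity) one_half_pos
  have hη2 : η ≤ 1/2 := min_le_right _ _
  have hηM : c * M * ((1-η) ^ (-α) - (1+η) ^ (-α)) < ε'/4 := by
    refine hball ?_
    rw [Real.dist_eq, sub_zero, abs_of_pos hη0]
    calc η ≤ δ₀/2 := min_le_left _ _
      _ < δ₀ := by linarith
  have h1mη : (0:ℝ) < 1 - η := by linarith
  have h1pη : (0:ℝ) < 1 + η := by linarith
  -- rpow facts
  have hXm0 : (0:ℝ) < (1-η) ^ (-α) := Real.rpow_pos_of_pos h1mη _
  have hXp0 : (0:ℝ) < (1+η) ^ (-α) := Real.rpow_pos_of_pos h1pη _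
  have hXmp : (1+η) ^ (-α) ≤ (1-η) ^ (-α) :=
    Real.rpow_le_rpow_of_nonpos h1mη (by linarith) (by linarith)
  have hXm2 : (1-η) ^ (-α) ≤ 2 ^ α := by
    have h1 : ((1:ℝ)/2) ^ (-α) = 2 ^ α := by
      rw [one_div, Real.inv_rpow (by norm_num : (0:ℝ) ≤ 2), Real.rpow_neg (by norm_num : (0:ℝ) ≤ 2),
        inv_inv]
    have h2 : (1-η) ^ (-α) ≤ ((1:ℝ)/2) ^ (-α) :=
      Real.rpow_le_rpow_of_nonpos one_half_pos (by linarith) (by linarith)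
    linarith
  have hXp1 : (1+η) ^ (-α) ≤ 1 :=
    Real.rpow_le_one_of_one_le_of_nonpos (by linarith) (by linarith)
  -- net of radius δ
  set δ : ℝ := η * r / K with hδdef
  have hδ0 : 0 < δ := by
    rw [hδdef]; exact div_pos (mul_pos hη0 hr) hK0
  have hδK : δ * K = η * r := by
    rw [hδdef]; exact div_mul_cancel₀ _ hK0.ne'
  clear_value δ η
  obtain ⟨T, hTunit, hTnet⟩ := rv_net δ hδ0
  -- eventual statements
  have hEnet : ∀ᶠ t : ℝ in atTop, ∀ w ∈ T,
      |(μ {ω | t * (1-η) * r ≤ ⟪w, X ω⟫}).toReal / (t * (1-η)) ^ (-α)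
        - c * (ν {x | r ≤ ⟪w, x⟫}).toReal| < ρ ∧
      |(μ {ω | t * (1+η) * r ≤ ⟪w, X ω⟫}).toReal / (t * (1+η)) ^ (-α)
        - c * (ν {x | r ≤ ⟪w, x⟫}).toReal| < ρ := by
    rw [eventually_all_finset]
    intro w hw
    have hwu := hTunit w hw
    have hm := (hptw w hwu).comp (Tendsto.atTop_mul_const h1mη tendsto_id)
    have hp := (hptw w hwu).comp (Tendsto.atTop_mul_const h1pη tendsto_id)
    rw [Metric.tendsto_nhds] at hm hp
    filter_upwards [hm ρ hρ0, hp ρ hρ0] with t h1 h2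
    constructor
    · simpa [Function.comp, Real.dist_eq] using h1
    · simpa [Function.comp, Real.dist_eq] using h2
  have hEq : ∀ᶠ t : ℝ in atTop,
      (μ {ω | t * K < ‖X ω‖}).toReal / (t * K) ^ (-α) < c + ρ := by
    have := (hnorm.comp (Tendsto.atTop_mul_const hK0 tendsto_id)).eventually_lt_const
      (lt_add_of_pos_right c hρ0)
    simpa [Function.comp] using this
  filter_upwards [hEnet, hEq, eventually_ge_atTop 1] with t hnet_t hq ht1
  have ht0 : (0:ℝ) < t := lt_of_lt_of_le one_pos ht1
  have htα : (0:ℝ) < t ^ (-α) := Real.rpow_pos_of_pos ht0 _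
  -- the key pointwise-in-u bound
  have key : ∀ v : EuclideanSpace ℝ (Fin d), ‖v‖ = 1 →
      |(μ {ω | t * r ≤ ⟪v, X ω⟫}).toReal / t ^ (-α)
        - c * (ν {x | r ≤ ⟪v, x⟫}).toReal| ≤ ε' := by
    intro v hv
    obtain ⟨w, hwT, hwδ⟩ := hTnet v hv
    obtain ⟨hm, hp⟩ := hnet_t w hwT
    set q : ℝ := (μ {ω | t * K < ‖X ω‖}).toReal / (t * K) ^ (-α) with hqdef
    have hq0 : 0 ≤ q := by
      rw [hqdef]
      exact div_nonneg ENNReal.toReal_nonneg (Real.rpow_pos_of_pos (mul_pos ht0 hK0) _).le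
    set p1 : ℝ := (μ {ω | t * (1-η) * r ≤ ⟪w, X ω⟫}).toReal / (t * (1-η)) ^ (-α) with hp1def
    set p2 : ℝ := (μ {ω | t * (1+η) * r ≤ ⟪w, X ω⟫}).toReal / (t * (1+η)) ^ (-α) with hp2def
    set gw : ℝ := (ν {x | r ≤ ⟪w, x⟫}).toReal with hgwdef
    set Gv : ℝ := (ν {x | r ≤ ⟪v, x⟫}).toReal with hGvdef
    set A1 : ℝ := (μ {ω | t * r ≤ ⟪v, X ω⟫}).toReal / t ^ (-α) with hA1def
    clear_value q p1 p2 gw Gv A1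
    -- inner product estimates
    have hinner : ∀ y : EuclideanSpace ℝ (Fin d),
        |⟪v, y⟫ - ⟪w, y⟫| ≤ δ * ‖y‖ := by
      intro y
      have h1 : ⟪v, y⟫ - ⟪w, y⟫ = ⟪v - w, y⟫ := by rw [inner_sub_left]
      rw [h1]
      calc |⟪v - w, y⟫| ≤ ‖v - w‖ * ‖y‖ := abs_real_inner_le_norm _ _
        _ ≤ δ * ‖y‖ := mul_le_mul_of_nonneg_right hwδ.le (norm_nonneg _)
    -- μ-side inclusions
    have hI1 : {ω | t * r ≤ ⟪v, X ω⟫} ⊆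
        {ω | t * (1-η) * r ≤ ⟪w, X ω⟫} ∪ {ω | t * K < ‖X ω‖} := by
      intro ω hω
      by_cases hXb : t * K < ‖X ω‖
      · exact Or.inr hXb
      · push_neg at hXb
        left
        have h1 := (abs_le.1 (hinner (X ω))).2
        have h2 : δ * ‖X ω‖ ≤ δ * (t * K) :=
          mul_le_mul_of_nonneg_left hXb hδ0.le
        have h3 : δ * (t * K) = t * (η * r) := by rw [show δ * (t*K) = t * (δ*K) by ring, hδK]
        have hω' : t * r ≤ ⟪v, X ω⟫ := hω
        show t * (1-η) * r ≤ ⟪w, X ω⟫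
        linarith
    have hI2 : {ω | t * (1+η) * r ≤ ⟪w, X ω⟫} ⊆
        {ω | t * r ≤ ⟪v, X ω⟫} ∪ {ω | t * K < ‖X ω‖} := by
      intro ω hω
      by_cases hXb : t * K < ‖X ω‖
      · exact Or.inr hXb
      · push_neg at hXb
        left
        have h1 := (abs_le.1 (hinner (X ω))).1
        have h2 : δ * ‖X ω‖ ≤ δ * (t * K) :=
          mul_le_mul_of_nonneg_left hXb hδ0.le
        have h3 : δ * (t * K) = t * (η * r) := by rw [show δ * (t*K) = t * (δ*K) by ring, hδK]
        have hω' : t * (1+η) * r ≤ ⟪w, X ω⟫ := hω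
        show t * r ≤ ⟪v, X ω⟫
        linarith
    -- ν-side inclusions
    have hJ1 : {x : EuclideanSpace ℝ (Fin d) | (1+η) * r ≤ ⟪w, x⟫} ⊆
        {x | r ≤ ⟪v, x⟫} ∪ {x | K ≤ ‖x‖} := by
      intro x hx
      by_cases hXb : K ≤ ‖x‖
      · exact Or.inr hXb
      · push_neg at hXb
        left
        have h1 := (abs_le.1 (hinner x)).1
        have h2 : δ * ‖x‖ ≤ δ * K := mul_le_mul_of_nonneg_left hXb.le hδ0.le
        have hx' : (1+η) * r ≤ ⟪w, x⟫ := hx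
        show r ≤ ⟪v, x⟫
        linarith [hδK]
    have hJ2 : {x : EuclideanSpace ℝ (Fin d) | r ≤ ⟪v, x⟫} ⊆
        {x | (1-η) * r ≤ ⟪w, x⟫} ∪ {x | K ≤ ‖x‖} := by
      intro x hx
      by_cases hXb : K ≤ ‖x‖
      · exact Or.inr hXb
      · push_neg at hXb
        left
        have h1 := (abs_le.1 (hinner x)).2
        have h2 : δ * ‖x‖ ≤ δ * K := mul_le_mul_of_nonneg_left hXb.le hδ0.le
        have hx' : r ≤ ⟪v, x⟫ := hx
        show (1-η) * r ≤ ⟪w, x⟫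
        linarith [hδK]
    -- μ-side inequalities
    have f1 : A1 ≤ p1 * (1-η) ^ (-α) + q * K ^ (-α) := by
      have h0 := hμ3 hI1
      have hdiv : A1 ≤ (μ {ω | t * (1-η) * r ≤ ⟪w, X ω⟫}).toReal / t ^ (-α)
          + (μ {ω | t * K < ‖X ω‖}).toReal / t ^ (-α) := by
        rw [hA1def, ← add_div]
        exact (div_le_div_iff_of_pos_right htα).2 h0
      have e1 : (μ {ω | t * (1-η) * r ≤ ⟪w, X ω⟫}).toReal / t ^ (-α) = p1 * (1-η) ^ (-α) := by
        rw [hp1def]; exact (rv_div_rpow t (1-η) _ α ht0 h1mη).symm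
      have e2 : (μ {ω | t * K < ‖X ω‖}).toReal / t ^ (-α) = q * K ^ (-α) := by
        rw [hqdef]; exact (rv_div_rpow t K _ α ht0 hK0).symm
      rw [e1, e2] at hdiv
      exact hdiv
    have f2 : p2 * (1+η) ^ (-α) ≤ A1 + q * K ^ (-α) := by
      have h0 := hμ3 hI2
      have hdiv : (μ {ω | t * (1+η) * r ≤ ⟪w, X ω⟫}).toReal / t ^ (-α)
          ≤ A1 + (μ {ω | t * K < ‖X ω‖}).toReal / t ^ (-α) := by
        rw [hA1def, ← add_div]
        exact (div_le_div_iff_of_pos_right htα).2 h0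
      have e1 : (μ {ω | t * (1+η) * r ≤ ⟪w, X ω⟫}).toReal / t ^ (-α) = p2 * (1+η) ^ (-α) := by
        rw [hp2def]; exact (rv_div_rpow t (1+η) _ α ht0 h1pη).symm
      have e2 : (μ {ω | t * K < ‖X ω‖}).toReal / t ^ (-α) = q * K ^ (-α) := by
        rw [hqdef]; exact (rv_div_rpow t K _ α ht0 hK0).symm
      rw [e1, e2] at hdiv
      exact hdiv
    -- ν-side inequalities
    have hKtail := hνtail K hK0
    have g1 : (1+η) ^ (-α) * gw ≤ Gv + τ := by
      have h0 := hν3 hJ1 (hfinS r hr v hv) hKtail.1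
      rw [hGscale w (hTunit w hwT) (1+η) h1pη, ← hgwdef, ← hGvdef] at h0
      linarith [hKtail.2, hτ, h0]
    have g2 : Gv ≤ (1-η) ^ (-α) * gw + τ := by
      have h0 := hν3 hJ2 (hfinS ((1-η)*r) (mul_pos h1mη hr) w (hTunit w hwT)) hKtail.1
      rw [hGscale w (hTunit w hwT) (1-η) h1mη, ← hgwdef, ← hGvdef] at h0
      linarith [hKtail.2, hτ, h0]
    -- combine
    have hgwM : gw ≤ M := by rw [hgwdef]; exact hGM w (hTunit w hwT)
    have hgw0 : 0 ≤ gw := by rw [hgwdef]; exact ENNReal.toReal_nonneg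
    have habs_m := abs_lt.1 hm
    have habs_p := abs_lt.1 hp
    have m1 : p1 * (1-η) ^ (-α) ≤ (c * gw + ρ) * (1-η) ^ (-α) :=
      mul_le_mul_of_nonneg_right (by linarith [habs_m.2]) hXm0.le
    have m2 : q * K ^ (-α) ≤ (c + ρ) * K ^ (-α) :=
      mul_le_mul_of_nonneg_right hq.le hKα0
    have m3 : (c * gw - ρ) * (1+η) ^ (-α) ≤ p2 * (1+η) ^ (-α) :=
      mul_le_mul_of_nonneg_right (by linarith [habs_p.1]) hXp0.le
    have n1 : c * ((1+η) ^ (-α) * gw - τ) ≤ c * Gv :=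
      mul_le_mul_of_nonneg_left (by linarith) hc.le
    have n2 : c * Gv ≤ c * ((1-η) ^ (-α) * gw + τ) :=
      mul_le_mul_of_nonneg_left g2 hc.le
    have bdiff : c * gw * ((1-η) ^ (-α) - (1+η) ^ (-α))
        ≤ c * M * ((1-η) ^ (-α) - (1+η) ^ (-α)) := by
      have h0 : 0 ≤ (1-η) ^ (-α) - (1+η) ^ (-α) := by linarith
      have := mul_le_mul_of_nonneg_right
        (mul_le_mul_of_nonneg_left hgwM hc.le) h0
      linarith
    have bρm : ρ * (1-η) ^ (-α) ≤ ε'/4 := by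
      have := mul_le_mul_of_nonneg_left hXm2 hρ0.le
      linarith [hρb]
    have bρp : ρ * (1+η) ^ (-α) ≤ ε'/4 := by
      have h0 : ρ * (1+η) ^ (-α) ≤ ρ * 1 := mul_le_mul_of_nonneg_left hXp1 hρ0.le
      have h1 : ρ * 1 ≤ ρ * 2 ^ α := mul_le_mul_of_nonneg_left h2α1 hρ0.le
      linarith [hρb]
    have bK : (c + ρ) * K ^ (-α) ≤ ε'/4 := by
      have h0 : (c + ρ) * K ^ (-α) ≤ (c + 1) * K ^ (-α) :=
        mul_le_mul_of_nonneg_right (by linarith) hKα0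
      linarith [hKa]
    have bτ : c * τ < ε'/4 := hKb
    rw [abs_le]
    constructor
    · -- -ε' ≤ A1 - c*Gv, i.e. c*Gv - A1 ≤ ε'
      linarith [f2, m3, n2, m2, bdiff, bρp, bK, bτ, hηM]
    · -- A1 - c*Gv ≤ ε'
      linarith [f1, m1, m2, n1, bdiff, bρm, bK, bτ, hηM]
  -- conclude about the supremum
  have hne : Nonempty {u : EuclideanSpace ℝ (Fin d) // ‖u‖ = 1} := by
    refine ⟨⟨EuclideanSpace.single ⟨0, hd⟩ (1:ℝ), ?_⟩⟩
    simp [EuclideanSpace.norm_single]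
  have hbddA : BddAbove (Set.range fun u : {u : EuclideanSpace ℝ (Fin d) // ‖u‖ = 1} =>
      |(μ {ω | t * r ≤ ⟪u.1, X ω⟫}).toReal / t ^ (-α)
        - c * (ν {x | r ≤ ⟪u.1, x⟫}).toReal|) := by
    refine ⟨ε', ?_⟩
    rintro x ⟨u, rfl⟩
    exact key u.1 u.2
  have hsup_le : (⨆ u : {u : EuclideanSpace ℝ (Fin d) // ‖u‖ = 1},
      |(μ {ω | t * r ≤ ⟪u.1, X ω⟫}).toReal / t ^ (-α)
        - c * (ν {x | r ≤ ⟪u.1, x⟫}).toReal|) ≤ ε' :=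
    ciSup_le fun u => key u.1 u.2
  have hsup_0 : 0 ≤ (⨆ u : {u : EuclideanSpace ℝ (Fin d) // ‖u‖ = 1},
      |(μ {ω | t * r ≤ ⟪u.1, X ω⟫}).toReal / t ^ (-α)
        - c * (ν {x | r ≤ ⟪u.1, x⟫}).toReal|) :=
    le_ciSup_of_le hbddA (Classical.arbitrary _) (abs_nonneg _)
  rw [Real.dist_eq, sub_zero, abs_of_nonneg hsup_0]
  calc (⨆ u : {u : EuclideanSpace ℝ (Fin d) // ‖u‖ = 1},
      |(μ {ω | t * r ≤ ⟪u.1, X ω⟫}).toReal / t ^ (-α)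
        - c * (ν {x | r ≤ ⟪u.1, x⟫}).toReal|) ≤ ε' := hsup_le
    _ < ε := by rw [hε'def]; linarith
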